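/- Assume that the reward is separable, r(x,a,μ) = r_A(x,a) + r_M(x,μ), that the transition kernel does not depend on the population, p(x'|x,a,μ) = p(x'|x,a), and that r_M is strictly monotone: Σ_{x∈X} (μ(x)−μ'(x))(r_M(x,μ)−r_M(x,μ')) < 0 for all μ ≠ μ' in Δ_X. Then for every μ₀ ∈ Δ_X, any two MFG Nash equilibria consistent with μ₀ have the same mean-field flow: if (𝛑,𝛍) and (𝛑',𝛍') are both MFG-NE consistent with μ₀ then 𝛍_n = 𝛍'_n for all n ≥ 0. -/
import Mathlib


open scoped BigOperators

section MFGDefs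

variable {X A : Type*} [Fintype X] [Fintype A]

/-- One-step population update `φ(μ, π)`:
`φ(μ,π)(x) = ∑_{x'} μ(x') ∑_a π(a|x') p(x|x',a,μ)`. -/
def popStep (p : X → A → (X → ℝ) → X → ℝ) (μ : X → ℝ) (π : X → A → ℝ) : X → ℝ :=
  fun x => ∑ x' : X, μ x' * ∑ a : A, π x' a * p x' a μ x

/-- MF flow `Φ(μ₀, 𝛑)` induced by a (population-agnostic) policy from an initial MF state. -/
def mfFlow (p : X → A → (X → ℝ) → X → ℝ) (μ₀ : X → ℝ) (πs : ℕ → X → A → ℝ) : ℕ → X → ℝ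
  | 0 => μ₀
  | n + 1 => popStep p (mfFlow p μ₀ πs n) (πs n)

/-- The agent's state marginals `ν`. -/
def marginals (p : X → A → (X → ℝ) → X → ℝ) (μ₀ : X → ℝ) (πs : ℕ → X → A → ℝ)
    (μs : ℕ → X → ℝ) : ℕ → X → ℝ
  | 0 => μ₀
  | n + 1 => fun x =>
      ∑ x' : X, marginals p μ₀ πs μs n x' * ∑ a : A, πs n x' a * p x' a (μs n) x

/-- Discounted total reward `J(μ₀, 𝛑; 𝛍)`. -/
noncomputable def totalReward (p : X → A → (X → ℝ) → X → ℝ) (r : X → A → (X → ℝ) → ℝ)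
    (γ : ℝ) (μ₀ : X → ℝ) (πs : ℕ → X → A → ℝ) (μs : ℕ → X → ℝ) : ℝ :=
  ∑' n : ℕ, γ ^ n * ∑ x : X, marginals p μ₀ πs μs n x * ∑ a : A, πs n x a * r x a (μs n)

/-- A population-agnostic policy: a sequence of stationary simplex-valued policies. -/
def IsPolicy (πs : ℕ → X → A → ℝ) : Prop := ∀ n x, πs n x ∈ stdSimplex ℝ A

/-- MFG Nash equilibrium consistent with `μ₀`: the flow is the one induced by the policy,
and the policy attains the best possible total reward against this flow. -/
def IsMFGNash (p : X → A → (X → ℝ) → X → ℝ) (r : X → A → (X → ℝ) → ℝ)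
    (γ : ℝ) (μ₀ : X → ℝ) (πs : ℕ → X → A → ℝ) (μs : ℕ → X → ℝ) : Prop :=
  IsPolicy πs ∧ μs = mfFlow p μ₀ πs ∧
    ∀ πs' : ℕ → X → A → ℝ, IsPolicy πs' →
      totalReward p r γ μ₀ πs' μs ≤ totalReward p r γ μ₀ πs μs

end MFGDefs

section AuxLemmas

variable {X A : Type*} [Fintype X] [Fintype A]

lemma mfFlow_mem_simplex (p : X → A → (X → ℝ) → X → ℝ) (μ₀ : X → ℝ)
    (πs : ℕ → X → A → ℝ)
    (hp : ∀ x a μ, μ ∈ stdSimplex ℝ X → p x a μ ∈ stdSimplex ℝ X)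
    (hπ : IsPolicy πs) (hμ₀ : μ₀ ∈ stdSimplex ℝ X) :
    ∀ n, mfFlow p μ₀ πs n ∈ stdSimplex ℝ X := by
  intro n
  induction n with
  | zero => exact hμ₀
  | succ n ih =>
    constructor
    · intro x
      apply Finset.sum_nonneg
      intro x' _
      exact mul_nonneg (ih.1 x') (Finset.sum_nonneg fun a _ =>
        mul_nonneg ((hπ n x').1 a) ((hp x' a _ ih).1 x))
    · show ∑ x : X, popStep p (mfFlow p μ₀ πs n) (πs n) x = 1
      unfold popStep
      rw [Finset.sum_comm]
      have h : ∀ x' : X,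
          ∑ x : X, mfFlow p μ₀ πs n x' * ∑ a : A, πs n x' a * p x' a (mfFlow p μ₀ πs n) x
            = mfFlow p μ₀ πs n x' := by
        intro x'
        rw [← Finset.mul_sum, Finset.sum_comm]
        have h2 : ∀ a : A,
            ∑ x : X, πs n x' a * p x' a (mfFlow p μ₀ πs n) x = πs n x' a := by
          intro a
          rw [← Finset.mul_sum, (hp x' a _ ih).2, mul_one]
        rw [Finset.sum_congr rfl fun a _ => h2 a, (hπ n x').2, mul_one]
      rw [Finset.sum_congr rfl fun x' _ => h x', ih.2]

lemma marginals_eq_mfFlow (p : X → A → (X → ℝ) → X → ℝ)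
    (hp_ind : ∀ x a (μ μ' : X → ℝ), p x a μ = p x a μ')
    (μ₀ : X → ℝ) (πs : ℕ → X → A → ℝ) (μs : ℕ → X → ℝ) :
    ∀ n, marginals p μ₀ πs μs n = mfFlow p μ₀ πs n := by
  intro n
  induction n with
  | zero => rfl
  | succ n ih =>
    funext x
    show ∑ x' : X, marginals p μ₀ πs μs n x' * ∑ a : A, πs n x' a * p x' a (μs n) x
        = popStep p (mfFlow p μ₀ πs n) (πs n) x
    rw [ih]
    unfold popStep
    refine Finset.sum_congr rfl fun x' _ => ?_
    congr 1
    refine Finset.sum_congr rfl fun a _ => ?_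
    rw [hp_ind x' a (μs n) (mfFlow p μ₀ πs n)]

lemma summable_geom_bound {γ C : ℝ} (hγ0 : 0 < γ) (hγ1 : γ < 1) {f : ℕ → ℝ}
    (hf : ∀ n, |f n| ≤ C * γ ^ n) : Summable f := by
  apply summable_abs_iff.mp
  exact Summable.of_nonneg_of_le (fun n => abs_nonneg _) hf
    ((summable_geometric_of_lt_one hγ0.le hγ1).mul_left C)

lemma weighted_sum_abs_le {ι : Type*} [Fintype ι] {w f : ι → ℝ} {C : ℝ}
    (hw : w ∈ stdSimplex ℝ ι) (hf : ∀ i, |f i| ≤ C) : |∑ i : ι, w i * f i| ≤ C := by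
  calc |∑ i : ι, w i * f i| ≤ ∑ i : ι, |w i * f i| := Finset.abs_sum_le_sum_abs _ _
    _ ≤ ∑ i : ι, w i * C := by
        refine Finset.sum_le_sum fun i _ => ?_
        rw [abs_mul, abs_of_nonneg (hw.1 i)]
        exact mul_le_mul_of_nonneg_left (hf i) (hw.1 i)
    _ = C := by rw [← Finset.sum_mul, hw.2, one_mul]

lemma sum_combo (r : X → A → (X → ℝ) → ℝ) (rA : X → A → ℝ) (rM : X → (X → ℝ) → ℝ)
    (hsep : ∀ x a μ, r x a μ = rA x a + rM x μ)
    (π π' : X → A → ℝ) (hπ : ∀ x, ∑ a : A, π x a = 1) (hπ' : ∀ x, ∑ a : A, π' x a = 1)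
    (m m' : X → ℝ) :
    ((∑ x : X, m x * ∑ a : A, π x a * r x a m)
        - (∑ x : X, m' x * ∑ a : A, π' x a * r x a m))
      + ((∑ x : X, m' x * ∑ a : A, π' x a * r x a m')
        - (∑ x : X, m x * ∑ a : A, π x a * r x a m'))
      = ∑ x : X, (m x - m' x) * (rM x m - rM x m') := by
  have key : ∀ (σ : X → A → ℝ), (∀ x, ∑ a : A, σ x a = 1) → ∀ (w μ : X → ℝ) (x : X),
      w x * ∑ a : A, σ x a * r x a μ = w x * ∑ a : A, σ x a * rA x a + w x * rM x μ := by
    intro σ hσ w μ x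
    have e : ∑ a : A, σ x a * r x a μ = (∑ a : A, σ x a * rA x a) + rM x μ := by
      have e2 : ∀ a, σ x a * r x a μ = σ x a * rA x a + σ x a * rM x μ := fun a => by
        rw [hsep]; ring
      rw [Finset.sum_congr rfl fun a _ => e2 a, Finset.sum_add_distrib,
        ← Finset.sum_mul, hσ x, one_mul]
    rw [e]; ring
  rw [Finset.sum_congr rfl fun x _ => key π hπ m m x,
    Finset.sum_congr rfl fun x _ => key π' hπ' m' m x,
    Finset.sum_congr rfl fun x _ => key π' hπ' m' m' x,
    Finset.sum_congr rfl fun x _ => key π hπ m m' x,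
    ← Finset.sum_sub_distrib, ← Finset.sum_sub_distrib, ← Finset.sum_add_distrib]
  exact Finset.sum_congr rfl fun x _ => by ring

end AuxLemmas


/-- Assume the reward is separable `r(x,a,μ) = r_A(x,a) + r_M(x,μ)`,
the transition kernel does not depend on the population, and `r_M` is strictly monotone on the
simplex. Then for every `μ₀ ∈ Δ_X`, any two MFG Nash equilibria consistent with `μ₀` have the
same mean-field flow. -/
theorem strictMonotone_unique_nash_flow
    {X A : Type*} [Fintype X] [Nonempty X] [Fintype A] [Nonempty A]
    (p : X → A → (X → ℝ) → X → ℝ) (r : X → A → (X → ℝ) → ℝ)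
    (rA : X → A → ℝ) (rM : X → (X → ℝ) → ℝ) (γ C : ℝ)
    (hp : ∀ x a μ, μ ∈ stdSimplex ℝ X → p x a μ ∈ stdSimplex ℝ X)
    (hp_ind : ∀ x a (μ μ' : X → ℝ), p x a μ = p x a μ')
    (hsep : ∀ x a μ, r x a μ = rA x a + rM x μ)
    (hr : ∀ x a μ, μ ∈ stdSimplex ℝ X → |r x a μ| ≤ C)
    (hγ : γ ∈ Set.Ioo (0 : ℝ) 1)
    (hmono : ∀ μ ∈ stdSimplex ℝ X, ∀ μ' ∈ stdSimplex ℝ X, μ ≠ μ' →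
      ∑ x : X, (μ x - μ' x) * (rM x μ - rM x μ') < 0) :
    ∀ μ₀ ∈ stdSimplex ℝ X, ∀ (πs πs' : ℕ → X → A → ℝ) (μs μs' : ℕ → X → ℝ),
      IsMFGNash p r γ μ₀ πs μs → IsMFGNash p r γ μ₀ πs' μs' →
      ∀ n : ℕ, μs n = μs' n := by
  obtain ⟨hγ0, hγ1⟩ := hγ
  intro μ₀ hμ₀ πs πs' μs μs' h1 h2
  obtain ⟨hπ1, hflow1, hopt1⟩ := h1
  obtain ⟨hπ2, hflow2, hopt2⟩ := h2
  have hμs : ∀ n, μs n ∈ stdSimplex ℝ X := by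
    intro n; rw [hflow1]; exact mfFlow_mem_simplex p μ₀ πs hp hπ1 hμ₀ n
  have hμs' : ∀ n, μs' n ∈ stdSimplex ℝ X := by
    intro n; rw [hflow2]; exact mfFlow_mem_simplex p μ₀ πs' hp hπ2 hμ₀ n
  -- the four term sequences
  set g1 : ℕ → ℝ := fun n => γ ^ n * ∑ x : X, μs n x * ∑ a : A, πs n x a * r x a (μs n)
    with hg1
  set g2 : ℕ → ℝ := fun n => γ ^ n * ∑ x : X, μs' n x * ∑ a : A, πs' n x a * r x a (μs n)
    with hg2
  set g3 : ℕ → ℝ := fun n => γ ^ n * ∑ x : X, μs n x * ∑ a : A, πs n x a * r x a (μs' n)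
    with hg3
  set g4 : ℕ → ℝ := fun n => γ ^ n * ∑ x : X, μs' n x * ∑ a : A, πs' n x a * r x a (μs' n)
    with hg4
  -- totalReward expressed through the flows
  have key : ∀ (π : ℕ → X → A → ℝ) (ρ : ℕ → X → ℝ), ρ = mfFlow p μ₀ π →
      ∀ (mus : ℕ → X → ℝ), totalReward p r γ μ₀ π mus
        = ∑' n, γ ^ n * ∑ x : X, ρ n x * ∑ a : A, π n x a * r x a (mus n) := by
    intro π ρ hρ mus
    unfold totalReward
    refine tsum_congr fun n => ?_
    rw [marginals_eq_mfFlow p hp_ind μ₀ π mus n, ← hρ]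
  have hJ11 : totalReward p r γ μ₀ πs μs = ∑' n, g1 n := key πs μs hflow1 μs
  have hJ21 : totalReward p r γ μ₀ πs' μs = ∑' n, g2 n := key πs' μs' hflow2 μs
  have hJ12 : totalReward p r γ μ₀ πs μs' = ∑' n, g3 n := key πs μs hflow1 μs'
  have hJ22 : totalReward p r γ μ₀ πs' μs' = ∑' n, g4 n := key πs' μs' hflow2 μs'
  -- summability
  have hbound : ∀ (π : ℕ → X → A → ℝ), IsPolicy π → ∀ (ρ mus : ℕ → X → ℝ),
      (∀ n, ρ n ∈ stdSimplex ℝ X) → (∀ n, mus n ∈ stdSimplex ℝ X) → ∀ n,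
      |γ ^ n * ∑ x : X, ρ n x * ∑ a : A, π n x a * r x a (mus n)| ≤ C * γ ^ n := by
    intro π hπ ρ mus hρ hmus n
    rw [abs_mul, abs_of_nonneg (pow_nonneg hγ0.le n), mul_comm]
    refine mul_le_mul_of_nonneg_right ?_ (pow_nonneg hγ0.le n)
    exact weighted_sum_abs_le (hρ n) fun x =>
      weighted_sum_abs_le (hπ n x) fun a => hr x a _ (hmus n)
  have hs1 : Summable g1 := summable_geom_bound hγ0 hγ1 (hbound πs hπ1 μs μs hμs hμs)
  have hs2 : Summable g2 := summable_geom_bound hγ0 hγ1 (hbound πs' hπ2 μs' μs hμs' hμs)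
  have hs3 : Summable g3 := summable_geom_bound hγ0 hγ1 (hbound πs hπ1 μs μs' hμs hμs')
  have hs4 : Summable g4 := summable_geom_bound hγ0 hγ1 (hbound πs' hπ2 μs' μs' hμs' hμs')
  -- the combined sequence
  set D : ℕ → ℝ := fun n => (g1 n - g2 n) + (g4 n - g3 n) with hD
  have hDsum : Summable D := (hs1.sub hs2).add (hs4.sub hs3)
  have hDeq : ∀ n, D n = γ ^ n * ∑ x : X, (μs n x - μs' n x) * (rM x (μs n) - rM x (μs' n)) := by
    intro n
    have hc := sum_combo r rA rM hsep (πs n) (πs' n)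
      (fun x => (hπ1 n x).2) (fun x => (hπ2 n x).2) (μs n) (μs' n)
    rw [hD]
    simp only [hg1, hg2, hg3, hg4]
    rw [← hc]; ring
  -- the total is nonnegative by the two Nash inequalities
  have hDnonneg : 0 ≤ ∑' n, D n := by
    have ht : ∑' n, D n = ((∑' n, g1 n) - ∑' n, g2 n) + ((∑' n, g4 n) - ∑' n, g3 n) := by
      rw [hD]
      rw [Summable.tsum_add (hs1.sub hs2) (hs4.sub hs3), Summable.tsum_sub hs1 hs2, Summable.tsum_sub hs4 hs3]
    have h21 : ∑' n, g2 n ≤ ∑' n, g1 n := by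
      rw [← hJ21, ← hJ11]; exact hopt1 πs' hπ2
    have h34 : ∑' n, g3 n ≤ ∑' n, g4 n := by
      rw [← hJ12, ← hJ22]; exact hopt2 πs hπ1
    rw [ht]
    have := sub_nonneg.mpr h21
    have := sub_nonneg.mpr h34
    linarith
  -- conclude
  by_contra hcon
  push_neg at hcon
  obtain ⟨N, hN⟩ := hcon
  have hDle : ∀ n, D n ≤ 0 := by
    intro n
    rw [hDeq n]
    rcases eq_or_ne (μs n) (μs' n) with h | h
    · simp [h]
    · exact le_of_lt (mul_neg_of_pos_of_neg (pow_pos hγ0 n)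
        (hmono _ (hμs n) _ (hμs' n) h))
  have hDN : D N < 0 := by
    rw [hDeq N]
    exact mul_neg_of_pos_of_neg (pow_pos hγ0 N) (hmono _ (hμs N) _ (hμs' N) hN)
  have hneg : ∑' n, D n < 0 := by
    classical
    rw [Summable.tsum_eq_add_tsum_ite hDsum N]
    have h2 : ∑' n, (if n = N then 0 else D n) ≤ 0 := by
      refine tsum_nonpos fun n => ?_
      split
      · exact le_refl 0
      · exact hDle n
    linarith
  linarith
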